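/- arXiv:2012.10721 — 6 statements merged into one kernel-verified Lean document; each statement's English description precedes it below -/
import Mathlib

section
/- For every A > 0 there exists a constant C' > 0 such that for all t ∈ ℝ with −A ≤ t ≤ A and all z ∈ ℂ with Re(z) > 0, one has Im(R(t,z)) ≥ Im(z) − C', where R(t,z) := (t² + z²)^{1/2}. -/
open Complex

/-- The principal square root `R(t,z) := (t² + z²)^{1/2}`. -/
noncomputable def Rtz (t : ℝ) (z : ℂ) : ℂ := ((t : ℂ) ^ 2 + z ^ 2) ^ ((1 : ℂ) / 2)

/-- For every `A > 0` there exists `C' > 0` such that, for all `t ∈ [−A, A]` and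
all `z ∈ ℂ` with `Re z > 0`, one has `Im(R(t,z)) ≥ Im(z) − C'`. -/
theorem stmt_2 (A : ℝ) (hA : 0 < A) :
    ∃ C' > (0 : ℝ), ∀ (t : ℝ), -A ≤ t → t ≤ A → ∀ (z : ℂ), 0 < z.re →
      z.im - C' ≤ (Rtz t z).im := by
  refine ⟨A, hA, fun t ht1 ht2 z hz => ?_⟩
  set x := z.re with hx
  set y := z.im with hy
  set w : ℂ := (t : ℂ) ^ 2 + z ^ 2 with hw
  have hwre : w.re = t ^ 2 + (x ^ 2 - y ^ 2) := by
    simp only [hw, pow_two, Complex.add_re, Complex.mul_re, Complex.ofReal_re,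
      Complex.ofReal_im]
    ring
  have hwim : w.im = 2 * x * y := by
    simp only [hw, pow_two, Complex.add_im, Complex.mul_im, Complex.ofReal_re,
      Complex.ofReal_im]
    ring
  have habs : ‖w‖ = Real.sqrt ((t ^ 2 + (x ^ 2 - y ^ 2)) ^ 2 + (2 * x * y) ^ 2) := by
    rw [Complex.norm_def, Complex.normSq_apply, hwre, hwim]; ring_nf
  have hR : (Rtz t z).im = (w ^ ((2 : ℂ)⁻¹)).im := by
    rw [Rtz, one_div]
  have htA : |t| ≤ A := abs_le.2 ⟨ht1, ht2⟩
  have htsq : |t| ^ 2 = t ^ 2 := sq_abs t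
  rcases le_or_gt y 0 with hy0 | hy0
  · -- y ≤ 0 : |Im R| ≤ |y| = -y, so Im R ≥ y ≥ y - A
    have hup : ‖w‖ ≤ t ^ 2 + x ^ 2 + y ^ 2 := by
      rw [habs]
      have h1 : (t ^ 2 + (x ^ 2 - y ^ 2)) ^ 2 + (2 * x * y) ^ 2
          ≤ (t ^ 2 + x ^ 2 + y ^ 2) ^ 2 := by nlinarith [sq_nonneg (t * y)]
      calc Real.sqrt ((t ^ 2 + (x ^ 2 - y ^ 2)) ^ 2 + (2 * x * y) ^ 2)
          ≤ Real.sqrt ((t ^ 2 + x ^ 2 + y ^ 2) ^ 2) := Real.sqrt_le_sqrt h1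
        _ = t ^ 2 + x ^ 2 + y ^ 2 := Real.sqrt_sq (by positivity)
    have him : |(w ^ ((2 : ℂ)⁻¹)).im| = Real.sqrt ((‖w‖ - w.re) / 2) :=
      Complex.abs_cpow_inv_two_im w
    have hle : |(w ^ ((2 : ℂ)⁻¹)).im| ≤ -y := by
      rw [him]
      calc Real.sqrt ((‖w‖ - w.re) / 2) ≤ Real.sqrt (y ^ 2) := by
            apply Real.sqrt_le_sqrt
            rw [hwre]; linarith
        _ = |y| := Real.sqrt_sq_eq_abs y
        _ = -y := abs_of_nonpos hy0
    have := neg_abs_le (w ^ ((2 : ℂ)⁻¹)).im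
    rw [hR]; linarith
  · -- y > 0 : Im R = sqrt((|w| - Re w)/2) ≥ 0
    have him : (w ^ ((2 : ℂ)⁻¹)).im = Real.sqrt ((‖w‖ - w.re) / 2) :=
      Complex.cpow_inv_two_im_eq_sqrt (by rw [hwim]; positivity)
    rcases le_or_gt y A with hyA | hyA
    · rw [hR, him]
      have := Real.sqrt_nonneg ((‖w‖ - w.re) / 2)
      linarith
    · -- y > A : lower bound |w| ≥ t² + x² + y² - 2y|t|
      have hc0 : 0 ≤ t ^ 2 + x ^ 2 + y ^ 2 - 2 * y * |t| := by
        nlinarith [sq_nonneg (y - |t|)]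
      have hlow : t ^ 2 + x ^ 2 + y ^ 2 - 2 * y * |t| ≤ ‖w‖ := by
        rw [habs]
        calc t ^ 2 + x ^ 2 + y ^ 2 - 2 * y * |t|
            = Real.sqrt ((t ^ 2 + x ^ 2 + y ^ 2 - 2 * y * |t|) ^ 2) :=
              (Real.sqrt_sq hc0).symm
          _ ≤ Real.sqrt ((t ^ 2 + (x ^ 2 - y ^ 2)) ^ 2 + (2 * x * y) ^ 2) := by
              apply Real.sqrt_le_sqrt
              nlinarith [mul_nonneg (mul_nonneg hy0.le (abs_nonneg t)) (sq_nonneg (y - |t|)),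
                mul_nonneg (mul_nonneg hy0.le (abs_nonneg t)) (sq_nonneg x), htsq]
      have hkey : (y - A) ^ 2 ≤ (‖w‖ - w.re) / 2 := by
        rw [hwre]
        have h2 : 2 * y * |t| ≤ 2 * y * A := by nlinarith
        nlinarith
      rw [hR, him]
      have : y - A = Real.sqrt ((y - A) ^ 2) := (Real.sqrt_sq (by linarith)).symm
      rw [this]
      exact Real.sqrt_le_sqrt hkey
end

section
/- There exists a constant C > 0 such that for all t ∈ ℝ and all z ∈ ℂ with Re(z) < 0 and |z| ≥ |t|, one has |R(t,z) + z| ≤ C t²/|z| and Im(R(t,z)) ≥ −Im(z) − C t²/|z|, where R(t,z) := (t² + z²)^{1/2}. -/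
open Complex

/-- There exists `C > 0` such that, for all `t ∈ ℝ` and `z ∈ ℂ` with `Re z < 0` and
`|z| ≥ |t|`, one has `|R(t,z) + z| ≤ C t²/|z|` and `Im(R(t,z)) ≥ −Im(z) − C t²/|z|`. -/
theorem stmt_3 :
    ∃ C > (0 : ℝ), ∀ (t : ℝ) (z : ℂ), z.re < 0 → |t| ≤ ‖z‖ →
      ‖Rtz t z + z‖ ≤ C * t ^ 2 / ‖z‖ ∧
      -z.im - C * t ^ 2 / ‖z‖ ≤ (Rtz t z).im := by
  refine ⟨1, one_pos, fun t z hzre htz => ?_⟩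
  set R := Rtz t z with hR
  set w : ℂ := (t : ℂ) ^ 2 + z ^ 2 with hw
  have hz0 : z ≠ 0 := fun h => by simp [h] at hzre
  have habs : 0 < ‖z‖ := norm_pos_iff.mpr hz0
  -- R^2 = w
  have hsq : R ^ 2 = w := by
    rw [hR, Rtz, one_div]
    exact cpow_ofNat_inv_pow _ 2
  -- Re R ≥ 0
  have hRe : 0 ≤ R.re := by
    rw [hR, Rtz, one_div]
    rw [Complex.cpow_inv_two_re]
    exact Real.sqrt_nonneg _
  -- Im R * Im z ≤ 0
  have hwim : w.im = 2 * z.re * z.im := by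
    simp [hw, pow_two, Complex.add_im, Complex.mul_im]
    ring
  have hIm : R.im * z.im ≤ 0 := by
    rcases lt_trichotomy z.im 0 with h | h | h
    · have hw0 : 0 ≤ w.im := by nlinarith
      have : R.im = Real.sqrt ((‖w‖ - w.re) / 2) := by
        rw [hR, Rtz, one_div]
        exact Complex.cpow_inv_two_im_eq_sqrt hw0
      nlinarith [Real.sqrt_nonneg ((‖w‖ - w.re) / 2)]
    · simp [h]
    · have hw0 : w.im < 0 := by nlinarith
      have : R.im = -Real.sqrt ((‖w‖ - w.re) / 2) := by
        rw [hR, Rtz, one_div]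
        exact Complex.cpow_inv_two_im_eq_neg_sqrt hw0
      nlinarith [Real.sqrt_nonneg ((‖w‖ - w.re) / 2)]
  -- |R - z| ≥ |z|
  have hge2 : ‖z‖ ^ 2 ≤ ‖R - z‖ ^ 2 := by
    rw [Complex.sq_norm, Complex.sq_norm, Complex.normSq_apply, Complex.normSq_apply,
      Complex.sub_re, Complex.sub_im]
    nlinarith [hIm, mul_nonneg hRe (neg_nonneg.2 hzre.le), sq_nonneg R.re, sq_nonneg R.im]
  have hge : ‖z‖ ≤ ‖R - z‖ := by
    nlinarith [norm_nonneg (R - z), norm_nonneg z]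
  have hRz : 0 < ‖R - z‖ := lt_of_lt_of_le habs hge
  -- |R - z| * |R + z| = t^2
  have hmul : (R - z) * (R + z) = (t : ℂ) ^ 2 := by
    linear_combination hsq
  have hprod : ‖R - z‖ * ‖R + z‖ = t ^ 2 := by
    rw [← norm_mul, hmul]
    rw [← Complex.ofReal_pow, Complex.norm_real, Real.norm_eq_abs, _root_.abs_of_nonneg (sq_nonneg t)]
  -- first bound
  have h1 : ‖R + z‖ ≤ t ^ 2 / ‖z‖ := by
    rw [le_div_iff₀ habs]
    calc ‖R + z‖ * ‖z‖ ≤ ‖R + z‖ * ‖R - z‖ := by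
          exact mul_le_mul_of_nonneg_left hge (norm_nonneg _)
      _ = t ^ 2 := by rw [mul_comm]; exact hprod
  have h2 : -z.im - t ^ 2 / ‖z‖ ≤ R.im := by
    have him := Complex.abs_im_le_norm (R + z)
    have : -(t ^ 2 / ‖z‖) ≤ (R + z).im := by
      have := neg_abs_le (R + z).im
      linarith
    rw [Complex.add_im] at this
    linarith
  constructor
  · simpa using h1
  · simpa using h2
end

section
/- For every ξ ∈ ℝ, one has ∫_ℝ e^{−iξt} · e^{t/2}/(π(e^{2t} + 1)) dt = sinh(π(ξ − i/2)/2) / sinh(π(ξ − i/2)); that is, the Fourier transform (with convention κ̂(ξ) = (1/√(2π)) ∫_ℝ κ(t) e^{−iξt} dt) of the function κ(t) := e^{t/2}/(π(e^{2t} + 1)) equals κ̂(ξ) = (1/√(2π)) · sinh(π(ξ − i/2)/2)/sinh(π(ξ − i/2)). -/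
open Complex Real MeasureTheory Set

noncomputable def myf (t : ℝ) : ℝ := Real.exp (2*t) / (1 + Real.exp (2*t))

lemma myf_hasDeriv (t : ℝ) :
    HasDerivAt myf (2 * Real.exp (2*t) / (1 + Real.exp (2*t))^2) t := by
  have he : HasDerivAt (fun t : ℝ => Real.exp (2*t)) (Real.exp (2*t) * 2) t := by
    simpa using (HasDerivAt.exp (by simpa using (hasDerivAt_id t).const_mul 2))
  have hq : (1 : ℝ) + Real.exp (2*t) ≠ 0 := by positivity
  have : HasDerivAt myf _ t := he.div (he.const_add 1) hq
  convert this using 1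
  field_simp
  ring

lemma myf_inj : Function.Injective myf := by
  intro s t h
  unfold myf at h
  have hs : (0:ℝ) < 1 + Real.exp (2*s) := by positivity
  have ht : (0:ℝ) < 1 + Real.exp (2*t) := by positivity
  rw [div_eq_div_iff hs.ne' ht.ne'] at h
  have : Real.exp (2*s) = Real.exp (2*t) := by nlinarith
  have := Real.exp_injective this
  linarith

lemma myf_image : myf '' univ = Ioo (0:ℝ) 1 := by
  ext y
  simp only [image_univ, mem_range, mem_Ioo]
  constructor
  · rintro ⟨t, rfl⟩
    have h1 : (0:ℝ) < Real.exp (2*t) := Real.exp_pos _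
    have h2 : (0:ℝ) < 1 + Real.exp (2*t) := by positivity
    constructor
    · exact div_pos h1 h2
    · unfold myf; rw [div_lt_one h2]; linarith
  · rintro ⟨h0, h1⟩
    refine ⟨Real.log (y/(1-y)) / 2, ?_⟩
    have hy : (0:ℝ) < y / (1-y) := div_pos h0 (by linarith)
    unfold myf
    rw [show 2 * (Real.log (y/(1-y)) / 2) = Real.log (y/(1-y)) by ring, Real.exp_log hy]
    rw [div_eq_iff (by positivity)]
    have h2 : (1:ℝ) - y ≠ 0 := by linarith
    field_simp
    ring

lemma cpow_pos_real {r : ℝ} (hr : 0 < r) (w : ℂ) :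
    (r:ℂ) ^ w = Complex.exp (w * Real.log r) := by
  rw [Complex.cpow_def_of_ne_zero (by exact_mod_cast hr.ne'), ← Complex.ofReal_log hr.le,
    mul_comm]

lemma key_point (ξ t : ℝ) :
    |2 * Real.exp (2*t) / (1 + Real.exp (2*t))^2| •
      ((myf t : ℂ) ^ ((((1/4:ℝ):ℂ) - ((ξ/2:ℝ):ℂ) * Complex.I) - 1) *
        (1 - (myf t : ℂ)) ^ ((1 - (((1/4:ℝ):ℂ) - ((ξ/2:ℝ):ℂ) * Complex.I)) - 1)) =
    2 * (Real.pi:ℂ) * (Complex.exp (-(Complex.I * (ξ : ℂ) * (t : ℂ))) *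
        (((Real.exp (t / 2) / (Real.pi * (Real.exp (2 * t) + 1))) : ℝ) : ℂ)) := by
  set a : ℂ := (((1/4:ℝ):ℂ) - ((ξ/2:ℝ):ℂ) * Complex.I) with ha
  have hq : (0:ℝ) < 1 + Real.exp (2*t) := by positivity
  set q : ℝ := 1 + Real.exp (2*t) with hqdef
  set L : ℝ := Real.log q with hL
  have hf_pos : 0 < myf t := div_pos (Real.exp_pos _) hq
  have h1f : 1 - (myf t : ℂ) = ((1/q : ℝ) : ℂ) := by
    have : (1:ℝ) - myf t = 1/q := by
      rw [show (myf t : ℝ) = Real.exp (2*t) / q from rfl]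
      field_simp
      rw [hqdef]; ring
    rw [← Complex.ofReal_one, ← Complex.ofReal_sub, this]
  have hlog1 : Real.log (myf t) = 2*t - L := by
    rw [show (myf t : ℝ) = Real.exp (2*t) / q from rfl, Real.log_div (Real.exp_pos _).ne' hq.ne',
      Real.log_exp]
  have hlog2 : Real.log (1/q) = -L := by
    rw [one_div, Real.log_inv]
  rw [h1f, cpow_pos_real hf_pos, cpow_pos_real (by positivity), hlog1, hlog2,
    ← Complex.exp_add]
  have hS : (a - 1) * ((2*t - L : ℝ) : ℂ) + ((1 - a) - 1) * ((-L : ℝ) : ℂ)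
      = -(Complex.I * (ξ : ℂ) * (t : ℂ)) + ((t/2 - 2*t + L : ℝ) : ℂ) := by
    rw [ha]; push_cast; ring
  have habs : |2 * Real.exp (2*t) / q^2| = 2 * Real.exp (2*t) / q^2 :=
    abs_of_pos (by positivity)
  rw [hS, Complex.exp_add, habs, Complex.real_smul, ← Complex.ofReal_exp]
  have hreal : Real.exp (t/2 - 2*t + L) = Real.exp (t/2) * Real.exp (-(2*t)) * q := by
    rw [Real.exp_add, Real.exp_sub, hL, Real.exp_log hq, Real.exp_neg]
    ring
  rw [hreal]
  have hmain : (2 * Real.exp (2*t) / q^2) * (Real.exp (t/2) * Real.exp (-(2*t)) * q)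
      = 2 * Real.pi * (Real.exp (t/2) / (Real.pi * (Real.exp (2*t) + 1))) := by
    have h1 : Real.exp (2*t) ≠ 0 := (Real.exp_pos _).ne'
    have h2 : Real.pi ≠ 0 := Real.pi_ne_zero
    rw [hqdef, Real.exp_neg]
    have h3 : (1:ℝ) + Real.exp (2*t) ≠ 0 := by positivity
    field_simp
    ring
  have hc : ((2 * Real.exp (2*t) / q^2 : ℝ):ℂ) * ((Real.exp (t/2) * Real.exp (-(2*t)) * q : ℝ):ℂ)
      = ((2 * Real.pi * (Real.exp (t/2) / (Real.pi * (Real.exp (2*t) + 1))) : ℝ):ℂ) := by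
    rw [← Complex.ofReal_mul, hmain]
  push_cast at hc ⊢
  linear_combination (Complex.exp (-(Complex.I * (ξ:ℂ) * (t:ℂ)))) * hc

lemma beta_subst (ξ : ℝ) :
    Complex.betaIntegral ((((1/4:ℝ):ℂ) - ((ξ/2:ℝ):ℂ) * Complex.I))
      (1 - ((((1/4:ℝ):ℂ) - ((ξ/2:ℝ):ℂ) * Complex.I))) =
    2 * (Real.pi:ℂ) * ∫ t : ℝ, Complex.exp (-(Complex.I * (ξ : ℂ) * (t : ℂ))) *
        (((Real.exp (t / 2) / (Real.pi * (Real.exp (2 * t) + 1))) : ℝ) : ℂ) := by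
  set a : ℂ := (((1/4:ℝ):ℂ) - ((ξ/2:ℝ):ℂ) * Complex.I) with ha
  set g : ℝ → ℂ := fun x => (x : ℂ) ^ (a - 1) * (1 - (x : ℂ)) ^ ((1 - a) - 1) with hg
  have h1 : Complex.betaIntegral a (1-a) = ∫ x in Ioo (0:ℝ) 1, g x := by
    rw [Complex.betaIntegral, intervalIntegral.integral_of_le zero_le_one,
      MeasureTheory.integral_Ioc_eq_integral_Ioo]
  rw [h1, ← myf_image,
    integral_image_eq_integral_abs_deriv_smul MeasurableSet.univ
      (fun x _ => (myf_hasDeriv x).hasDerivWithinAt) (myf_inj.injOn) g,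
    Measure.restrict_univ]
  rw [show (fun t : ℝ => |2 * Real.exp (2*t) / (1 + Real.exp (2*t))^2| • g (myf t))
      = fun t : ℝ => 2 * (Real.pi:ℂ) * (Complex.exp (-(Complex.I * (ξ : ℂ) * (t : ℂ))) *
        (((Real.exp (t / 2) / (Real.pi * (Real.exp (2 * t) + 1))) : ℝ) : ℂ))
      from funext fun t => key_point ξ t]
  rw [MeasureTheory.integral_const_mul]

/-- For every `ξ ∈ ℝ`,
`∫_ℝ e^{−iξt} · e^{t/2}/(π(e^{2t} + 1)) dt = sinh(π(ξ − i/2)/2) / sinh(π(ξ − i/2))`;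
i.e. the Fourier transform of `κ(t) = e^{t/2}/(π(e^{2t}+1))` (with the convention
`κ̂(ξ) = (1/√(2π)) ∫ κ(t) e^{−iξt} dt`) equals
`(1/√(2π)) sinh(π(ξ − i/2)/2)/sinh(π(ξ − i/2))`. -/
theorem stmt_13 (ξ : ℝ) :
    ∫ t : ℝ, Complex.exp (-(Complex.I * (ξ : ℂ) * (t : ℂ))) *
        (((Real.exp (t / 2) / (Real.pi * (Real.exp (2 * t) + 1))) : ℝ) : ℂ) =
      Complex.sinh ((Real.pi : ℂ) * ((ξ : ℂ) - Complex.I / 2) / 2) /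
        Complex.sinh ((Real.pi : ℂ) * ((ξ : ℂ) - Complex.I / 2)) := by
  set a : ℂ := (((1/4:ℝ):ℂ) - ((ξ/2:ℝ):ℂ) * Complex.I) with ha
  set w : ℂ := (Real.pi : ℂ) * ((ξ : ℂ) - Complex.I / 2) / 2 with hw
  set u : ℂ := Complex.exp w with hu
  have hune : u ≠ 0 := Complex.exp_ne_zero w
  have hEpos := Real.exp_pos (Real.pi * ξ)
  have huu : u * u = ((Real.exp (Real.pi * ξ) : ℝ) : ℂ) * (-Complex.I) := by
    rw [hu, ← Complex.exp_add,
      show w + w = ((Real.pi * ξ : ℝ) : ℂ) + ((-(Real.pi/2) : ℝ) : ℂ) * Complex.I by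
        rw [hw]; push_cast; ring,
      Complex.exp_add, Complex.exp_mul_I, ← Complex.ofReal_cos, ← Complex.ofReal_sin,
      Real.cos_neg, Real.sin_neg, Real.cos_pi_div_two, Real.sin_pi_div_two,
      Complex.ofReal_exp]
    push_cast
    ring
  have hsinh_ne : Complex.sinh w ≠ 0 := by
    intro h
    rw [Complex.sinh, div_eq_zero_iff, sub_eq_zero] at h
    rcases h with h | h
    · rw [Complex.exp_neg, ← hu] at h
      have h2 : u * u = 1 := by
        nth_rewrite 2 [h]
        exact mul_inv_cancel₀ hune
      rw [huu] at h2
      have him := congrArg Complex.im h2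
      simp [-Complex.ofReal_exp] at him
    · norm_num at h
  have hcosh_ne : Complex.cosh w ≠ 0 := by
    intro h
    rw [Complex.cosh, div_eq_zero_iff] at h
    rcases h with h | h
    · rw [Complex.exp_neg, ← hu] at h
      have h2 : u * u = -1 := by
        field_simp at h
        linear_combination h
      rw [huu] at h2
      have him := congrArg Complex.im h2
      simp [-Complex.ofReal_exp] at him
    · norm_num at h
  have hI2 : Complex.exp (((Real.pi/2 : ℝ):ℂ) * Complex.I) = Complex.I := by
    rw [Complex.exp_mul_I, ← Complex.ofReal_cos, ← Complex.ofReal_sin,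
      Real.cos_pi_div_two, Real.sin_pi_div_two]
    simp
  have hsin : Complex.sin ((Real.pi : ℂ) * a) = Complex.cosh w := by
    have hv : (Real.pi : ℂ) * a * Complex.I = w + ((Real.pi/2 : ℝ):ℂ) * Complex.I := by
      rw [ha, hw]; push_cast; linear_combination (-((Real.pi:ℂ) * (ξ:ℂ))/2) * Complex.I_sq
    have hv' : -((Real.pi : ℂ) * a) * Complex.I = -w + -(((Real.pi/2 : ℝ):ℂ) * Complex.I) := by
      rw [ha, hw]; push_cast; linear_combination (((Real.pi:ℂ) * (ξ:ℂ))/2) * Complex.I_sq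
    rw [Complex.sin, Complex.cosh, hv, hv', Complex.exp_add, Complex.exp_add, hI2,
      Complex.exp_neg (((Real.pi/2 : ℝ):ℂ) * Complex.I), hI2, Complex.exp_neg w, ← hu,
      Complex.inv_I]
    field_simp
    linear_combination (-(1+u^2)) * Complex.I_sq
  have hre1 : 0 < a.re := by rw [ha]; simp
  have hre2 : 0 < (1 - a).re := by rw [ha]; simp; norm_num
  have hbeta : Complex.betaIntegral a (1-a) = (Real.pi : ℂ) / Complex.sin ((Real.pi : ℂ) * a) := by
    have h := Complex.Gamma_mul_Gamma_eq_betaIntegral hre1 hre2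
    rw [show a + (1-a) = 1 by ring, Complex.Gamma_one, one_mul] at h
    rw [← h, Complex.Gamma_mul_Gamma_one_sub]
  have hsub := beta_subst ξ
  rw [← ha, hbeta, hsin] at hsub
  have h2w : (Real.pi : ℂ) * ((ξ : ℂ) - Complex.I / 2) = 2 * w := by rw [hw]; ring
  rw [h2w, Complex.sinh_two_mul]
  have hpi : (Real.pi : ℂ) ≠ 0 := by exact_mod_cast Real.pi_ne_zero
  have h2pi : (2 * (Real.pi:ℂ)) ≠ 0 := by simp [hpi]
  apply mul_left_cancel₀ h2pi
  rw [← hsub]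
  field_simp
end

section
/- For every ξ ∈ ℝ, one has |sinh(π(ξ − i/2)/2)| ≤ (1/√2) · |sinh(π(ξ − i/2))|, and equality holds if and only if ξ = 0 (at which point the left side equals sin(π/4) and the right side equals (1/√2)·sin(π/2) = 1/√2). -/
open Complex Real

lemma aux1 (ξ : ℝ) :
    norm (Complex.sinh ((Real.pi : ℂ) * ((ξ : ℂ) - Complex.I / 2))) =
      Real.cosh (Real.pi * ξ) := by
  have h : (Real.pi : ℂ) * ((ξ : ℂ) - Complex.I / 2) =
      ((Real.pi * ξ : ℝ) : ℂ) + ((-(Real.pi/2) : ℝ) : ℂ) * Complex.I := by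
    push_cast; ring
  rw [h, Complex.sinh_add, Complex.sinh_mul_I, Complex.cosh_mul_I,
    ← Complex.ofReal_sinh, ← Complex.ofReal_cosh, ← Complex.ofReal_sin,
    ← Complex.ofReal_cos, ← Complex.ofReal_mul, ← mul_assoc, ← Complex.ofReal_mul,
    Complex.norm_add_mul_I]
  rw [Real.cos_neg, Real.sin_neg, Real.cos_pi_div_two, Real.sin_pi_div_two]
  simp [Real.sqrt_sq_eq_abs, abs_of_pos (Real.cosh_pos _)]

lemma aux2 (ξ : ℝ) :
    norm (Complex.sinh ((Real.pi : ℂ) * ((ξ : ℂ) - Complex.I / 2) / 2)) =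
      Real.sqrt (Real.cosh (Real.pi * ξ) / 2) := by
  have h : (Real.pi : ℂ) * ((ξ : ℂ) - Complex.I / 2) / 2 =
      ((Real.pi * ξ / 2 : ℝ) : ℂ) + ((-(Real.pi/4) : ℝ) : ℂ) * Complex.I := by
    push_cast; ring
  rw [h, Complex.sinh_add, Complex.sinh_mul_I, Complex.cosh_mul_I,
    ← Complex.ofReal_sinh, ← Complex.ofReal_cosh, ← Complex.ofReal_sin,
    ← Complex.ofReal_cos, ← Complex.ofReal_mul, ← mul_assoc, ← Complex.ofReal_mul,
    Complex.norm_add_mul_I]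
  rw [Real.cos_neg, Real.sin_neg, Real.cos_pi_div_four, Real.sin_pi_div_four]
  congr 1
  have h2 : Real.cosh (Real.pi * ξ) = Real.cosh (Real.pi*ξ/2) ^ 2 + Real.sinh (Real.pi*ξ/2) ^ 2 := by
    rw [← Real.cosh_two_mul]; ring_nf
  have h3 : Real.sqrt 2 ^ 2 = 2 := Real.sq_sqrt (by norm_num)
  rw [h2]
  field_simp
  nlinarith [h3]


/-- For every `ξ ∈ ℝ`, `|sinh(π(ξ − i/2)/2)| ≤ (1/√2)|sinh(π(ξ − i/2))|`, with equality
if and only if `ξ = 0`; at `ξ = 0` the left side equals `sin(π/4)` and the right side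
equals `(1/√2)·sin(π/2) = 1/√2`. -/
theorem stmt_14 (ξ : ℝ) :
    norm (Complex.sinh ((Real.pi : ℂ) * ((ξ : ℂ) - Complex.I / 2) / 2)) ≤
      (1 / Real.sqrt 2) *
        norm (Complex.sinh ((Real.pi : ℂ) * ((ξ : ℂ) - Complex.I / 2))) ∧
    (norm (Complex.sinh ((Real.pi : ℂ) * ((ξ : ℂ) - Complex.I / 2) / 2)) =
        (1 / Real.sqrt 2) *
          norm (Complex.sinh ((Real.pi : ℂ) * ((ξ : ℂ) - Complex.I / 2))) ↔
      ξ = 0) ∧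
    norm (Complex.sinh ((Real.pi : ℂ) * ((0 : ℂ) - Complex.I / 2) / 2)) =
      Real.sin (Real.pi / 4) ∧
    (1 / Real.sqrt 2) *
        norm (Complex.sinh ((Real.pi : ℂ) * ((0 : ℂ) - Complex.I / 2))) =
      1 / Real.sqrt 2 := by
  have s2 : Real.sqrt 2 ^ 2 = 2 := Real.sq_sqrt (by norm_num)
  have s2pos : 0 < Real.sqrt 2 := Real.sqrt_pos.mpr (by norm_num)
  have c1 : (1:ℝ) ≤ Real.cosh (Real.pi * ξ) := Real.one_le_cosh _
  set c := Real.cosh (Real.pi * ξ) with hc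
  have hR : (1 / Real.sqrt 2) * c = Real.sqrt (c ^ 2 / 2) := by
    rw [Real.sqrt_div (by positivity), Real.sqrt_sq (by linarith)]
    ring
  refine ⟨?_, ?_, ?_, ?_⟩
  · rw [aux1, aux2, hR]
    exact Real.sqrt_le_sqrt (by nlinarith)
  · rw [aux1, aux2, hR, Real.sqrt_inj (by positivity) (by positivity)]
    constructor
    · intro h
      have hceq : c = 1 := by nlinarith
      have hs : Real.sinh (Real.pi * ξ) = 0 := by
        nlinarith [Real.cosh_sq (Real.pi * ξ), Real.sinh_sq (Real.pi * ξ)]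
      have := Real.sinh_eq_zero.mp hs
      exact (mul_eq_zero.mp this).resolve_left Real.pi_ne_zero
    · rintro rfl
      simp only [hc, mul_zero, Real.cosh_zero]
      norm_num
  · have h := aux2 0
    push_cast at h
    rw [h]
    rw [mul_zero, Real.cosh_zero, Real.sin_pi_div_four]
    rw [show (1:ℝ)/2 = (Real.sqrt 2 / 2)^2 by rw [div_pow, s2]; norm_num]
    exact Real.sqrt_sq (by positivity)
  · have h := aux1 0
    push_cast at h
    rw [h, mul_zero, Real.cosh_zero, mul_one]
end

section
/- Let 0 ≤ θ < π/2. Then for every t > 0 and every z ∈ ℂ with 0 ≤ Arg(z) ≤ θ (including z = 0), the principal square root R(t,z) := (t² + z²)^{1/2} satisfies 0 ≤ Arg(R(t,z)) ≤ π/2 (so that Im(R(t,z)) ≥ 0) and |R(t,z)| ≥ cos(θ) · t. -/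
open Complex Real

/-- Let `0 ≤ θ < π/2`. For every `t > 0` and `z ∈ ℂ` with `0 ≤ Arg z ≤ θ` (including
`z = 0`), one has `0 ≤ Arg(R(t,z)) ≤ π/2` (so `Im(R(t,z)) ≥ 0`) and
`|R(t,z)| ≥ cos θ · t`. -/
theorem stmt_18 (θ : ℝ) (hθ₀ : 0 ≤ θ) (hθ₁ : θ < π / 2) (t : ℝ) (ht : 0 < t)
    (z : ℂ) (hz₀ : 0 ≤ z.arg) (hz₁ : z.arg ≤ θ) :
    0 ≤ (Rtz t z).arg ∧ (Rtz t z).arg ≤ π / 2 ∧ 0 ≤ (Rtz t z).im ∧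
      Real.cos θ * t ≤ ‖Rtz t z‖ := by
  have hπ := Real.pi_pos
  have hcθ : 0 < Real.cos θ := Real.cos_pos_of_mem_Ioo ⟨by linarith, hθ₁⟩
  set x := z.re with hxdef
  set y := z.im with hydef
  have hy : 0 ≤ y := Complex.arg_nonneg_iff.mp hz₀
  have hx : 0 ≤ x := by
    have : |z.arg| ≤ π / 2 := by
      rw [_root_.abs_of_nonneg hz₀]; linarith
    exact Complex.abs_arg_le_pi_div_two_iff.mp this
  -- key: y * cos θ ≤ x * sin θ
  have hkey : y * Real.cos θ ≤ x * Real.sin θ := by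
    have hs : Real.sin (z.arg - θ) ≤ 0 := by
      apply Real.sin_nonpos_of_nonpos_of_neg_pi_le
      · linarith
      · linarith
    rw [Real.sin_sub] at hs
    have hsin : Real.sin z.arg = y / ‖z‖ := Complex.sin_arg z
    rcases eq_or_ne z 0 with rfl | hz
    · simp [hxdef, hydef]
    · have hcos : Real.cos z.arg = x / ‖z‖ := Complex.cos_arg hz
      have habs : 0 < ‖z‖ := norm_pos_iff.mpr hz
      rw [hsin, hcos] at hs
      have := mul_nonpos_of_nonpos_of_nonneg hs habs.le
      rw [sub_mul] at this
      have h1 : y / ‖z‖ * Real.cos θ * ‖z‖ = y * Real.cos θ := by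
        field_simp
      have h2 : x / ‖z‖ * Real.sin θ * ‖z‖ = x * Real.sin θ := by
        field_simp
      rw [h1, h2] at this
      linarith
  set w : ℂ := (t : ℂ) ^ 2 + z ^ 2 with hwdef
  have hwre : w.re = t ^ 2 + (x ^ 2 - y ^ 2) := by
    simp [hwdef, pow_two, Complex.mul_re, Complex.add_re, hxdef, hydef]
  have hwim : w.im = 2 * x * y := by
    simp [hwdef, pow_two, Complex.mul_im, Complex.add_im, hxdef, hydef]
    ring
  have hwim0 : 0 ≤ w.im := by rw [hwim]; positivity
  -- lower bound on |w|
  have hproj : Real.cos θ * w.re + Real.sin θ * w.im ≤ ‖w‖ := by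
    set u : ℂ := (Real.cos (-θ) : ℂ) + (Real.sin (-θ) : ℂ) * Complex.I with hu
    have h1 : (u * w).re ≤ ‖u * w‖ := Complex.re_le_norm _
    have hu1 : ‖u‖ = 1 := by
      rw [hu, Complex.norm_add_mul_I]
      rw [show Real.cos (-θ) ^ 2 + Real.sin (-θ) ^ 2 = 1 by
        rw [add_comm]; exact Real.sin_sq_add_cos_sq (-θ)]
      exact Real.sqrt_one
    rw [norm_mul, hu1, one_mul] at h1
    have h2 : (u * w).re = Real.cos θ * w.re + Real.sin θ * w.im := by
      rw [hu]
      simp [Complex.mul_re, Complex.add_re, Complex.add_im, Real.cos_neg, Real.sin_neg,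
        Complex.cos_ofReal_re, Complex.sin_ofReal_re]
    linarith [h2 ▸ h1]
  have hwabs : Real.cos θ * t ^ 2 ≤ ‖w‖ := by
    have hz2 : 0 ≤ Real.cos θ * (x ^ 2 - y ^ 2) + Real.sin θ * (2 * x * y) := by
      have hsθ : 0 ≤ Real.sin θ := Real.sin_nonneg_of_nonneg_of_le_pi hθ₀ (by linarith)
      nlinarith [mul_nonneg hy (sub_nonneg.mpr hkey), mul_nonneg (mul_nonneg hsθ hx) hy,
        mul_nonneg hcθ.le (mul_nonneg hx hx)]
    calc Real.cos θ * t ^ 2 ≤ Real.cos θ * w.re + Real.sin θ * w.im := by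
          rw [hwre, hwim]; nlinarith
      _ ≤ ‖w‖ := hproj
  have hw0 : w ≠ 0 := by
    intro h
    rw [h, norm_zero] at hwabs
    nlinarith [mul_pos hcθ (pow_pos ht 2)]
  have habsw_pos : 0 < ‖w‖ := norm_pos_iff.mpr hw0
  -- |Rtz| = |w| ^ (1/2)
  have hRabs : ‖Rtz t z‖ = ‖w‖ ^ ((1 : ℝ) / 2) := by
    rw [Rtz, ← hwdef, Complex.norm_cpow_of_ne_zero hw0]
    norm_num
  have habs_ge : Real.cos θ * t ≤ ‖Rtz t z‖ := by
    rw [hRabs]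
    have h1 : (Real.cos θ * t) ^ 2 ≤ ‖w‖ := by
      nlinarith [mul_nonneg (mul_nonneg hcθ.le (sub_nonneg.mpr (Real.cos_le_one θ))) (sq_nonneg t)]
    have h2 : ((Real.cos θ * t) ^ 2 : ℝ) ^ ((1 : ℝ) / 2) ≤ ‖w‖ ^ ((1 : ℝ) / 2) :=
      Real.rpow_le_rpow (by positivity) h1 (by norm_num)
    rwa [← Real.sqrt_eq_rpow ((Real.cos θ * t) ^ 2), Real.sqrt_sq (by positivity)] at h2
  -- arg of Rtz
  have harg0 : 0 ≤ w.arg := Complex.arg_nonneg_iff.mpr hwim0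
  have hargπ : w.arg ≤ π := Complex.arg_le_pi w
  have hargR : (Rtz t z).arg = w.arg / 2 := by
    rw [Rtz, ← hwdef, Complex.cpow_def_of_ne_zero hw0]
    have him : (Complex.log w * (1 / 2)).im = w.arg / 2 := by
      simp [Complex.mul_im, Complex.log_im]
      ring
    rw [← Complex.log_im, Complex.log_exp (by rw [him]; linarith) (by rw [him]; linarith), him]
  have hR0 : 0 ≤ (Rtz t z).arg := by rw [hargR]; linarith
  have hR1 : (Rtz t z).arg ≤ π / 2 := by rw [hargR]; linarith
  exact ⟨hR0, hR1, Complex.arg_nonneg_iff.mp hR0, habs_ge⟩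
end

section
/- Let a > 0, y₁ ∈ ℝ and y₂ ∈ [−a, a]. Then for every z ∈ ℂ with Re(z) > a, the complex number (y₁ − a)² + (y₂ − z)² does not lie in ℝ⁻ = (−∞, 0], and consequently the map z ↦ ((y₁ − a)² + (y₂ − z)²)^{1/2} is holomorphic on the half-plane {z ∈ ℂ : Re(z) > a}. -/
open Complex Real

theorem key_19 (a y₁ y₂ : ℝ) (ha : 0 < a) (hy₂ : y₂ ∈ Set.Icc (-a) a) :
    ∀ z : ℂ, a < z.re →
      ¬((((y₁ : ℂ) - (a : ℂ)) ^ 2 + ((y₂ : ℂ) - z) ^ 2).im = 0 ∧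
        (((y₁ : ℂ) - (a : ℂ)) ^ 2 + ((y₂ : ℂ) - z) ^ 2).re ≤ 0) := by
  rintro z hz ⟨him, hre⟩
  obtain ⟨h1, h2⟩ := hy₂
  have hx : y₂ < z.re := lt_of_le_of_lt h2 hz
  simp [Complex.add_im, Complex.add_re, Complex.sq_norm, pow_two, Complex.mul_im,
    Complex.mul_re, Complex.sub_re, Complex.sub_im, Complex.ofReal_re, Complex.ofReal_im] at him hre
  -- him : about (y₂ - z.re) * z.im
  have hzim : z.im = 0 := by
    rcases mul_eq_zero.mp (by nlinarith [him] : (y₂ - z.re) * z.im = 0) with h | h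
    · nlinarith
    · exact h
  nlinarith [sq_nonneg (y₁ - a), sq_nonneg (y₂ - z.re)]

/-- Let `a > 0`, `y₁ ∈ ℝ`, `y₂ ∈ [−a, a]`. Then for every `z ∈ ℂ` with `Re z > a` the
complex number `(y₁ − a)² + (y₂ − z)²` does not lie in `(−∞, 0]`, and consequently
`z ↦ ((y₁ − a)² + (y₂ − z)²)^{1/2}` is holomorphic on `{z : Re z > a}`. -/
theorem stmt_19 (a y₁ y₂ : ℝ) (ha : 0 < a) (hy₂ : y₂ ∈ Set.Icc (-a) a) :
    (∀ z : ℂ, a < z.re →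
      ¬((((y₁ : ℂ) - (a : ℂ)) ^ 2 + ((y₂ : ℂ) - z) ^ 2).im = 0 ∧
        (((y₁ : ℂ) - (a : ℂ)) ^ 2 + ((y₂ : ℂ) - z) ^ 2).re ≤ 0)) ∧
    DifferentiableOn ℂ
      (fun z : ℂ => (((y₁ : ℂ) - (a : ℂ)) ^ 2 + ((y₂ : ℂ) - z) ^ 2) ^ ((1 : ℂ) / 2))
      {z : ℂ | a < z.re} := by
  refine ⟨key_19 a y₁ y₂ ha hy₂, ?_⟩
  intro z hz
  have hslit : (((y₁ : ℂ) - (a : ℂ)) ^ 2 + ((y₂ : ℂ) - z) ^ 2) ∈ Complex.slitPlane := by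
    have := key_19 a y₁ y₂ ha hy₂ z hz
    rw [Complex.mem_slitPlane_iff]
    by_contra h
    push_neg at h
    exact this ⟨h.2, h.1⟩
  have hd : DifferentiableAt ℂ
      (fun z : ℂ => (((y₁ : ℂ) - (a : ℂ)) ^ 2 + ((y₂ : ℂ) - z) ^ 2) ^ ((1 : ℂ) / 2)) z := by
    apply DifferentiableAt.cpow
    · exact (differentiableAt_const _).add (((differentiableAt_const _).sub differentiableAt_id).pow 2)
    · exact differentiableAt_const _
    · exact hslit
  exact hd.differentiableWithinAt
end
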